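/- Let X be a compact topological space and ω a continuous closed 1-form on X. Suppose there exists a homotopy h : X × [0,1] → X with h(x,0) = x for all x and ∫_{t ↦ h(x,t)} ω < 0 for every x ∈ X. Then for every N > 0 there exists a homotopy H : X × [0,1] → X with H(x,0) = x and ∫_{t ↦ H(x,t)} ω ≤ −N for every x ∈ X; in other words, the whole space X is N-movable with respect to ω for every N, so cat(X, ω) = 0. -/

import Mathlib

open Set

/-- A continuous closed 1-form on a topological space `X`: a collection of
continuous real-valued functions `f i : U i → ℝ` indexed by an open cover
`{U i}` of `X`, such that on overlaps the differences `f i − f j` are locally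
constant.  (The functions are recorded as total functions `X → ℝ`; only their
restrictions to `U i` matter.) -/
structure ClosedOneForm (X : Type) [TopologicalSpace X] : Type 1 where
  ι : Type
  U : ι → Set X
  isOpen : ∀ i, IsOpen (U i)
  covers : ∀ x : X, ∃ i, x ∈ U i
  f : ι → X → ℝ
  cont : ∀ i, ContinuousOn (f i) (U i)
  locConst : ∀ i j, ∀ x ∈ U i ∩ U j, ∃ W, IsOpen W ∧ x ∈ W ∧
    ∀ y ∈ W ∩ (U i ∩ U j), f i y - f j y = f i x - f j x

namespace ClosedOneForm

variable {X Y : Type} [TopologicalSpace X] [TopologicalSpace Y]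

/-- `r` is a value of the line integral `∫_γ ω` of the closed 1-form `ω` over
the path `γ : [a,b] → X`: there is a partition `a = t₀ ≤ ⋯ ≤ t_n = b` with
`γ([t_m, t_{m+1}]) ⊆ U (idx m)` and
`r = Σ_m (f (idx m) (γ t_{m+1}) − f (idx m) (γ t_m))`. -/
def IsPathIntegral (ω : ClosedOneForm X) (γ : ℝ → X) (a b r : ℝ) : Prop :=
  ∃ (n : ℕ) (t : ℕ → ℝ) (idx : ℕ → ω.ι),
    t 0 = a ∧ t n = b ∧ (∀ m < n, t m ≤ t (m + 1)) ∧
    (∀ m < n, ∀ s ∈ Set.Icc (t m) (t (m + 1)), γ s ∈ ω.U (idx m)) ∧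
    r = ∑ m ∈ Finset.range n, (ω.f (idx m) (γ (t (m + 1))) - ω.f (idx m) (γ (t m)))

open scoped Classical in
/-- The line integral `∫_γ ω` over `γ : [a,b] → X` (its value is independent
of all choices; it is defined, via choice, as the common value computed from
any admissible partition). -/
noncomputable def pathIntegral (ω : ClosedOneForm X) (γ : ℝ → X) (a b : ℝ) : ℝ :=
  if h : ∃ r, ω.IsPathIntegral γ a b r then h.choose else 0

/-- A subset `A ⊆ X` is `N`-movable with respect to `ω` if there is a homotopy
`H : A × [0,1] → X` with `H(a,0) = a` and `∫_{t ↦ H(a,t)} ω ≤ −N` for all `a ∈ A`. -/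
def NMovable (ω : ClosedOneForm X) (A : Set X) (N : ℝ) : Prop :=
  ∃ H : X × ℝ → X, ContinuousOn H (A ×ˢ Set.Icc (0 : ℝ) 1) ∧
    (∀ a ∈ A, H (a, 0) = a) ∧
    ∀ a ∈ A, ω.pathIntegral (fun t => H (a, t)) 0 1 ≤ -N

end ClosedOneForm

/-- The inclusion of `V` into `X` is null-homotopic. -/
def NullhomotopicIn (X : Type) [TopologicalSpace X] (V : Set X) : Prop :=
  ∃ (H : X × ℝ → X) (x₀ : X), ContinuousOn H (V ×ˢ Set.Icc (0 : ℝ) 1) ∧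
    (∀ v ∈ V, H (v, 0) = v) ∧ (∀ v ∈ V, H (v, 1) = x₀)

/-- `cat_X(A) ≤ k`: the subset `A` can be covered by `k` open subsets of `X`,
each null-homotopic in `X`. -/
def CatLE (X : Type) [TopologicalSpace X] (A : Set X) (k : ℕ) : Prop :=
  ∃ V : Fin k → Set X, (∀ i, IsOpen (V i)) ∧ A ⊆ ⋃ i, V i ∧
    ∀ i, NullhomotopicIn X (V i)

/-- `cat_X(A)`, the Lusternik–Schnirelmann category of `A` in `X`. -/
noncomputable def catSet (X : Type) [TopologicalSpace X] (A : Set X) : ℕ :=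
  sInf {k | CatLE X A k}

/-- `cat(X)`, the Lusternik–Schnirelmann category of `X`. -/
noncomputable def catSpace (X : Type) [TopologicalSpace X] : ℕ :=
  catSet X Set.univ

namespace ClosedOneForm

/-- `cat(X, ω)`: the minimal `k` such that for every `N > 0` there is a closed
subset `A ⊆ X`, `N`-movable with respect to `ω`, with `cat_X(X − A) ≤ k`. -/
noncomputable def catForm {X : Type} [TopologicalSpace X] (ω : ClosedOneForm X) : ℕ :=
  sInf {k | ∀ N : ℝ, 0 < N →
    ∃ A : Set X, IsClosed A ∧ ω.NMovable A N ∧ CatLE X Aᶜ k}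

end ClosedOneForm

namespace ClosedOneForm

variable {X Y : Type} [TopologicalSpace X] [TopologicalSpace Y]

/-- The pullback `φ*ω` of a closed 1-form along a continuous map `φ : Y → X`,
given by the cover `{φ⁻¹(U)}` and the functions `f_U ∘ φ`. -/
def pullback (ω : ClosedOneForm X) (φ : Y → X) (hφ : Continuous φ) :
    ClosedOneForm Y where
  ι := ω.ι
  U i := φ ⁻¹' ω.U i
  isOpen i := (ω.isOpen i).preimage hφ
  covers y := ω.covers (φ y)
  f i := ω.f i ∘ φ
  cont i := (ω.cont i).comp hφ.continuousOn (fun _ h => h)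
  locConst := by
    intro i j y hy
    obtain ⟨W, hWo, hxW, hW⟩ := ω.locConst i j (φ y) hy
    exact ⟨φ ⁻¹' W, hWo.preimage hφ, hxW, fun z hz => hW (φ z) hz⟩

/-- The sum `ω₁ + ω₂` of two closed 1-forms on `X`, given on the common
refinement of the two covers by the sums of the local functions. -/
def add (ω₁ ω₂ : ClosedOneForm X) : ClosedOneForm X where
  ι := ω₁.ι × ω₂.ι
  U p := ω₁.U p.1 ∩ ω₂.U p.2
  isOpen p := (ω₁.isOpen p.1).inter (ω₂.isOpen p.2)
  covers x := by
    obtain ⟨i, hi⟩ := ω₁.covers x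
    obtain ⟨j, hj⟩ := ω₂.covers x
    exact ⟨(i, j), hi, hj⟩
  f p x := ω₁.f p.1 x + ω₂.f p.2 x
  cont p := ((ω₁.cont p.1).mono Set.inter_subset_left).add
    ((ω₂.cont p.2).mono Set.inter_subset_right)
  locConst := by
    intro p q x hx
    obtain ⟨W₁, h1o, h1x, h1⟩ := ω₁.locConst p.1 q.1 x ⟨hx.1.1, hx.2.1⟩
    obtain ⟨W₂, h2o, h2x, h2⟩ := ω₂.locConst p.2 q.2 x ⟨hx.1.2, hx.2.2⟩
    refine ⟨W₁ ∩ W₂, h1o.inter h2o, ⟨h1x, h2x⟩, fun y hy => ?_⟩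
    have e1 := h1 y ⟨hy.1.1, hy.2.1.1, hy.2.2.1⟩
    have e2 := h2 y ⟨hy.1.2, hy.2.1.2, hy.2.2.2⟩
    try dsimp only at e1 e2 ⊢
    linarith

/-- The closed 1-form `ω + dg` obtained from `ω` by adding the differential of
a continuous function `g : X → ℝ`, i.e. adding `g|_U` to each local function. -/
def addFun (ω : ClosedOneForm X) (g : X → ℝ) (hg : Continuous g) :
    ClosedOneForm X where
  ι := ω.ι
  U := ω.U
  isOpen := ω.isOpen
  covers := ω.covers
  f i x := ω.f i x + g x
  cont i := (ω.cont i).add hg.continuousOn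
  locConst := by
    intro i j x hx
    obtain ⟨W, hWo, hWx, hW⟩ := ω.locConst i j x hx
    refine ⟨W, hWo, hWx, fun y hy => ?_⟩
    have := hW y hy
    try dsimp only at this ⊢
    linarith

end ClosedOneForm


open Set

section Aux

lemma chain_mono {t : ℕ → ℝ} {n : ℕ} (ht : ∀ m < n, t m ≤ t (m + 1)) :
    ∀ i j, i ≤ j → j ≤ n → t i ≤ t j := by
  intro i j hij hjn
  induction j with
  | zero => exact le_of_eq (by rw [Nat.le_zero.mp hij])
  | succ j ih =>
    rcases Nat.eq_or_lt_of_le hij with h | h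
    · rw [h]
    · exact le_trans (ih (Nat.lt_succ_iff.mp h) (le_trans (Nat.le_succ j) hjn))
        (ht j (Nat.lt_of_succ_le hjn))

lemma const_of_locallyConst {g : ℝ → ℝ} {u v : ℝ}
    (hloc : ∀ s ∈ Icc u v, ∃ W : Set ℝ, IsOpen W ∧ s ∈ W ∧ ∀ y ∈ W ∩ Icc u v, g y = g s) :
    ∀ s ∈ Icc u v, g s = g u := by
  classical
  intro s hs
  by_contra hne
  have hu : u ∈ Icc u v := ⟨le_refl u, hs.1.trans hs.2⟩
  choose W hWo hWmem hWconst using hloc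
  set A := ⋃ (z : Icc u v) (_ : g z = g u), W z z.2 with hA
  set B := ⋃ (z : Icc u v) (_ : g z ≠ g u), W z z.2 with hB
  have hAo : IsOpen A := isOpen_iUnion fun z => isOpen_iUnion fun _ => hWo z z.2
  have hBo : IsOpen B := isOpen_iUnion fun z => isOpen_iUnion fun _ => hWo z z.2
  have hcover : Icc u v ⊆ A ∪ B := by
    intro z hz
    by_cases h : g z = g u
    · exact Or.inl (mem_iUnion.mpr ⟨⟨z, hz⟩, mem_iUnion.mpr ⟨h, hWmem z hz⟩⟩)
    · exact Or.inr (mem_iUnion.mpr ⟨⟨z, hz⟩, mem_iUnion.mpr ⟨h, hWmem z hz⟩⟩)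
  have hAne : (Icc u v ∩ A).Nonempty :=
    ⟨u, hu, mem_iUnion.mpr ⟨⟨u, hu⟩, mem_iUnion.mpr ⟨rfl, hWmem u hu⟩⟩⟩
  have hBne : (Icc u v ∩ B).Nonempty :=
    ⟨s, hs, mem_iUnion.mpr ⟨⟨s, hs⟩, mem_iUnion.mpr ⟨hne, hWmem s hs⟩⟩⟩
  obtain ⟨y, hyI, hyA, hyB⟩ := isPreconnected_Icc A B hAo hBo hcover hAne hBne
  obtain ⟨z₁, hz₁⟩ := mem_iUnion.mp hyA
  obtain ⟨hgz₁, hyW₁⟩ := mem_iUnion.mp hz₁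
  obtain ⟨z₂, hz₂⟩ := mem_iUnion.mp hyB
  obtain ⟨hgz₂, hyW₂⟩ := mem_iUnion.mp hz₂
  have e1 : g y = g z₁ := hWconst z₁ z₁.2 y ⟨hyW₁, hyI⟩
  have e2 : g y = g z₂ := hWconst z₂ z₂.2 y ⟨hyW₂, hyI⟩
  exact hgz₂ (by rw [← e2, e1, hgz₁])

end Aux

namespace ClosedOneForm

variable {X : Type} [TopologicalSpace X]

lemma mem_Icc_of_partition {t : ℕ → ℝ} {n : ℕ} {a b : ℝ} (ht0 : t 0 = a) (htn : t n = b)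
    (hmono : ∀ m < n, t m ≤ t (m + 1)) : ∀ m ≤ n, t m ∈ Icc a b := fun m hm =>
  ⟨ht0 ▸ chain_mono hmono 0 m (Nat.zero_le m) (hm.trans le_rfl),
   htn ▸ chain_mono hmono m n hm le_rfl⟩

lemma increment_eq (ω : ClosedOneForm X) {γ : ℝ → X} {u v : ℝ} (huv : u ≤ v)
    (hγ : ContinuousOn γ (Icc u v)) {i j : ω.ι}
    (hi : ∀ s ∈ Icc u v, γ s ∈ ω.U i) (hj : ∀ s ∈ Icc u v, γ s ∈ ω.U j) :
    ω.f i (γ v) - ω.f j (γ v) = ω.f i (γ u) - ω.f j (γ u) := by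
  refine const_of_locallyConst (g := fun s => ω.f i (γ s) - ω.f j (γ s)) ?_ v ⟨huv, le_refl v⟩
  intro s hs
  obtain ⟨W, hWo, hWx, hW⟩ := ω.locConst i j (γ s) ⟨hi s hs, hj s hs⟩
  have hmem : γ ⁻¹' W ∈ nhdsWithin s (Icc u v) :=
    (hγ s hs) (hWo.mem_nhds hWx)
  obtain ⟨O, hOo, hsO, hOsub⟩ := mem_nhdsWithin.mp hmem
  exact ⟨O, hOo, hsO, fun y hy => hW (γ y) ⟨hOsub ⟨hy.1, hy.2⟩, hi y hy.2, hj y hy.2⟩⟩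

lemma isPathIntegral_single (ω : ClosedOneForm X) {γ : ℝ → X} {a b r : ℝ} {i : ω.ι}
    (hγ : ContinuousOn γ (Icc a b))
    (hi : ∀ s ∈ Icc a b, γ s ∈ ω.U i)
    (h : ω.IsPathIntegral γ a b r) :
    r = ω.f i (γ b) - ω.f i (γ a) := by
  obtain ⟨n, t, idx, ht0, htn, hmono, hmem, hsum⟩ := h
  have hrange := mem_Icc_of_partition ht0 htn hmono
  have key : ∀ m ∈ Finset.range n,
      ω.f (idx m) (γ (t (m + 1))) - ω.f (idx m) (γ (t m))
      = ω.f i (γ (t (m + 1))) - ω.f i (γ (t m)) := by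
    intro m hm'
    have hm := Finset.mem_range.mp hm'
    have hsub : Icc (t m) (t (m + 1)) ⊆ Icc a b :=
      Icc_subset_Icc (hrange m hm.le).1 (hrange (m + 1) hm).2
    have := ω.increment_eq (hmono m hm) (hγ.mono hsub) (i := idx m) (j := i)
      (fun s hs => hmem m hm s hs) (fun s hs => hi s (hsub hs))
    linarith
  rw [hsum, Finset.sum_congr rfl key,
    Finset.sum_range_sub (fun m => ω.f i (γ (t m))), ht0, htn]

lemma isPathIntegral_split (ω : ClosedOneForm X) {γ : ℝ → X} {a b c r : ℝ}
    (hac : a ≤ c) (hcb : c ≤ b) (h : ω.IsPathIntegral γ a b r) :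
    ∃ r₁ r₂, ω.IsPathIntegral γ a c r₁ ∧ ω.IsPathIntegral γ c b r₂ ∧ r = r₁ + r₂ := by
  classical
  obtain ⟨n, t, idx, ht0, htn, hmono, hmem, hsum⟩ := h
  obtain ⟨i₀, hi₀⟩ := ω.covers (γ c)
  refine ⟨_, _,
    ⟨n, fun m => min (t m) c, fun m => if c < t m then i₀ else idx m,
      by show t 0 ⊓ c = a; rw [ht0]; exact min_eq_left hac,
      by show t n ⊓ c = c; rw [htn]; exact min_eq_right hcb,
      fun m hm => min_le_min (hmono m hm) le_rfl, ?_, rfl⟩,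
    ⟨n, fun m => max (t m) c, fun m => if t (m + 1) < c then i₀ else idx m,
      by show t 0 ⊔ c = c; rw [ht0]; exact max_eq_right hac,
      by show t n ⊔ c = b; rw [htn]; exact max_eq_left hcb,
      fun m hm => max_le_max (hmono m hm) le_rfl, ?_, rfl⟩, ?_⟩
  · intro m hm s hs
    dsimp only at hs ⊢
    by_cases hc : c < t m
    · have h1 : min (t m) c = c := min_eq_right hc.le
      have h2 : min (t (m + 1)) c = c := min_eq_right ((hc.trans_le (hmono m hm)).le)
      rw [h1, h2] at hs
      have : s = c := le_antisymm hs.2 hs.1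
      simpa [hc, this] using hi₀
    · push_neg at hc
      rw [if_neg (not_lt.mpr hc)]
      refine hmem m hm s ⟨le_trans (le_of_eq (min_eq_left hc).symm) hs.1, ?_⟩
      exact hs.2.trans (min_le_left _ _)
  · intro m hm s hs
    dsimp only at hs ⊢
    by_cases hc : t (m + 1) < c
    · have h1 : max (t m) c = c := max_eq_right ((hmono m hm).trans hc.le)
      have h2 : max (t (m + 1)) c = c := max_eq_right hc.le
      rw [h1, h2] at hs
      have : s = c := le_antisymm hs.2 hs.1
      simpa [hc, this] using hi₀
    · push_neg at hc
      rw [if_neg (not_lt.mpr hc)]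
      refine hmem m hm s ⟨le_trans (le_max_left _ _) hs.1, ?_⟩
      exact hs.2.trans (le_of_eq (max_eq_left hc))
  · rw [hsum, ← Finset.sum_add_distrib]
    refine Finset.sum_congr rfl fun m hm' => ?_
    dsimp only
    have hm := Finset.mem_range.mp hm'
    have hmm := hmono m hm
    by_cases h1 : c < t m
    · have e1 : min (t m) c = c := min_eq_right h1.le
      have e2 : min (t (m + 1)) c = c := min_eq_right (h1.trans_le hmm).le
      have e3 : max (t m) c = t m := max_eq_left h1.le
      have e4 : max (t (m + 1)) c = t (m + 1) := max_eq_left (h1.trans_le hmm).le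
      have h2 : ¬ t (m + 1) < c := not_lt.mpr (h1.trans_le hmm).le
      simp only [e1, e2, e3, e4, if_pos h1, if_neg h2]
      ring
    · push_neg at h1
      by_cases h2 : t (m + 1) < c
      · have e1 : min (t m) c = t m := min_eq_left h1
        have e2 : min (t (m + 1)) c = t (m + 1) := min_eq_left h2.le
        have e3 : max (t m) c = c := max_eq_right (hmm.trans h2.le)
        have e4 : max (t (m + 1)) c = c := max_eq_right h2.le
        simp only [e1, e2, e3, e4, if_neg (not_lt.mpr h1), if_pos h2]
        ring
      · push_neg at h2
        have e1 : min (t m) c = t m := min_eq_left h1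
        have e2 : min (t (m + 1)) c = c := min_eq_right h2
        have e3 : max (t m) c = c := max_eq_right h1
        have e4 : max (t (m + 1)) c = t (m + 1) := max_eq_left h2
        simp only [e1, e2, e3, e4, if_neg (not_lt.mpr h1), if_neg (not_lt.mpr h2)]
        ring

end ClosedOneForm

namespace ClosedOneForm

variable {X : Type} [TopologicalSpace X]

lemma isPathIntegral_unique_aux (ω : ClosedOneForm X) :
    ∀ n : ℕ, ∀ (γ : ℝ → X) (a b r r' : ℝ) (t : ℕ → ℝ) (idx : ℕ → ω.ι),
      t 0 = a → t n = b → (∀ m < n, t m ≤ t (m + 1)) →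
      (∀ m < n, ∀ s ∈ Icc (t m) (t (m + 1)), γ s ∈ ω.U (idx m)) →
      r = ∑ m ∈ Finset.range n, (ω.f (idx m) (γ (t (m + 1))) - ω.f (idx m) (γ (t m))) →
      ContinuousOn γ (Icc a b) → ω.IsPathIntegral γ a b r' → r = r' := by
  intro n
  induction n with
  | zero =>
    intro γ a b r r' t idx ht0 htn _ _ hsum _ h'
    have hab : a = b := ht0 ▸ htn ▸ rfl
    obtain ⟨n', t', idx', h0', hn', hmono', _, hsum'⟩ := h'
    have hall : ∀ m ≤ n', t' m = a := by
      intro m hm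
      have h1 : a ≤ t' m := h0' ▸ chain_mono hmono' 0 m (Nat.zero_le _) hm
      have h2 : t' m ≤ b := hn' ▸ chain_mono hmono' m n' hm le_rfl
      linarith [hab ▸ h2, h1, hab.symm ▸ h2]
    rw [hsum, hsum']
    rw [Finset.sum_range_zero]
    symm
    refine Finset.sum_eq_zero fun m hm' => ?_
    have hm := Finset.mem_range.mp hm'
    rw [hall m hm.le, hall (m + 1) hm, sub_self]
  | succ n ih =>
    intro γ a b r r' t idx ht0 htn hmono hmem hsum hγ h'
    set c := t n with hc
    have hmono' : ∀ m < n, t m ≤ t (m + 1) := fun m hm => hmono m (hm.trans (Nat.lt_succ_self n))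
    have hac : a ≤ c := ht0 ▸ chain_mono hmono 0 n (Nat.zero_le _) (Nat.le_succ n)
    have hcb : c ≤ b := htn ▸ hmono n (Nat.lt_succ_self n)
    obtain ⟨r₁', r₂', h1', h2', hsplit⟩ := ω.isPathIntegral_split hac hcb h'
    have hIccsub : Icc a c ⊆ Icc a b := Icc_subset_Icc le_rfl hcb
    have e1 : (∑ m ∈ Finset.range n, (ω.f (idx m) (γ (t (m + 1))) - ω.f (idx m) (γ (t m)))) = r₁' :=
      ih γ a c _ r₁' t idx ht0 rfl hmono'
        (fun m hm s hs => hmem m (hm.trans (Nat.lt_succ_self n)) s hs) rfl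
        (hγ.mono hIccsub) h1'
    have e2 : r₂' = ω.f (idx n) (γ b) - ω.f (idx n) (γ c) := by
      refine ω.isPathIntegral_single (hγ.mono (Icc_subset_Icc hac le_rfl)) ?_ h2'
      intro s hs
      have := hmem n (Nat.lt_succ_self n) s (by rw [← htn] at hs; exact hs)
      exact this
    rw [hsum, Finset.sum_range_succ, e1, hsplit, e2, htn]

lemma isPathIntegral_unique (ω : ClosedOneForm X) {γ : ℝ → X} {a b r r' : ℝ}
    (hγ : ContinuousOn γ (Icc a b)) (h : ω.IsPathIntegral γ a b r)
    (h' : ω.IsPathIntegral γ a b r') : r = r' := by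
  obtain ⟨n, t, idx, ht0, htn, hmono, hmem, hsum⟩ := h
  exact ω.isPathIntegral_unique_aux n γ a b r r' t idx ht0 htn hmono hmem hsum hγ h'

lemma pathIntegral_eq (ω : ClosedOneForm X) {γ : ℝ → X} {a b r : ℝ}
    (hγ : ContinuousOn γ (Icc a b)) (h : ω.IsPathIntegral γ a b r) :
    ω.pathIntegral γ a b = r := by
  have hex : ∃ r, ω.IsPathIntegral γ a b r := ⟨r, h⟩
  rw [pathIntegral, dif_pos hex]
  exact ω.isPathIntegral_unique hγ hex.choose_spec h

lemma isPathIntegral_self (ω : ClosedOneForm X) {γ : ℝ → X} {a b : ℝ}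
    (hne : ω.pathIntegral γ a b ≠ 0) :
    ω.IsPathIntegral γ a b (ω.pathIntegral γ a b) := by
  by_cases hex : ∃ r, ω.IsPathIntegral γ a b r
  · rw [pathIntegral, dif_pos hex]
    exact hex.choose_spec
  · exact absurd (by rw [pathIntegral, dif_neg hex]) hne

lemma isPathIntegral_congr (ω : ClosedOneForm X) {γ γ' : ℝ → X} {a b r : ℝ}
    (hcg : ∀ s ∈ Icc a b, γ s = γ' s) (h : ω.IsPathIntegral γ a b r) :
    ω.IsPathIntegral γ' a b r := by
  obtain ⟨n, t, idx, ht0, htn, hmono, hmem, hsum⟩ := h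
  have hrange := mem_Icc_of_partition ht0 htn hmono
  have hsub : ∀ m < n, Icc (t m) (t (m + 1)) ⊆ Icc a b := fun m hm =>
    Icc_subset_Icc (hrange m hm.le).1 (hrange (m + 1) hm).2
  refine ⟨n, t, idx, ht0, htn, hmono, ?_, ?_⟩
  · intro m hm s hs
    rw [← hcg s (hsub m hm hs)]
    exact hmem m hm s hs
  · rw [hsum]
    refine Finset.sum_congr rfl fun m hm' => ?_
    have hm := Finset.mem_range.mp hm'
    rw [hcg (t m) (hrange m hm.le), hcg (t (m + 1)) (hrange (m + 1) hm)]

lemma isPathIntegral_affine (ω : ClosedOneForm X) {γ : ℝ → X} {a b r k c : ℝ} (hk : 0 < k)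
    (h : ω.IsPathIntegral γ a b r) :
    ω.IsPathIntegral (fun s => γ (k * s + c)) ((a - c) / k) ((b - c) / k) r := by
  obtain ⟨n, t, idx, ht0, htn, hmono, hmem, hsum⟩ := h
  have hback : ∀ u : ℝ, k * ((u - c) / k) + c = u := fun u => by field_simp; ring
  refine ⟨n, fun m => (t m - c) / k, idx,
    by dsimp only; rw [ht0], by dsimp only; rw [htn], ?_, ?_, ?_⟩
  · intro m hm
    have := hmono m hm
    dsimp only
    apply div_le_div_of_nonneg_right (by linarith) hk.le
  · intro m hm s hs
    dsimp only at hs ⊢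
    refine hmem m hm (k * s + c) ⟨?_, ?_⟩
    · have h1 := (div_le_iff₀ hk).mp hs.1
      linarith [mul_comm s k]
    · have h2 := (le_div_iff₀ hk).mp hs.2
      linarith [mul_comm s k]
  · rw [hsum]
    refine Finset.sum_congr rfl fun m _ => ?_
    dsimp only
    rw [hback, hback]

lemma isPathIntegral_trans (ω : ClosedOneForm X) {γ : ℝ → X} {a b c r₁ r₂ : ℝ}
    (h₁ : ω.IsPathIntegral γ a c r₁) (h₂ : ω.IsPathIntegral γ c b r₂) :
    ω.IsPathIntegral γ a b (r₁ + r₂) := by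
  classical
  obtain ⟨n₁, t₁, i₁, h10, h1n, h1m, h1mem, h1s⟩ := h₁
  obtain ⟨n₂, t₂, i₂, h20, h2n, h2m, h2mem, h2s⟩ := h₂
  set t : ℕ → ℝ := fun m => if m < n₁ then t₁ m else t₂ (m - n₁) with ht
  have htv : ∀ m ≤ n₁, t m = t₁ m := by
    intro m hm
    rcases lt_or_eq_of_le hm with h | h
    · simp [ht, h]
    · simp [ht, h, h20, h1n]
  have htv2 : ∀ m, t (n₁ + m) = t₂ m := by
    intro m
    rcases Nat.eq_zero_or_pos m with h | h
    · subst h; rw [Nat.add_zero, htv n₁ le_rfl, h1n, ← h20]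
    · simp only [ht, if_neg (by omega : ¬ n₁ + m < n₁)]
      congr 1
      omega
  have htv2' : ∀ m, n₁ ≤ m → t m = t₂ (m - n₁) := fun m hm => by
    have := htv2 (m - n₁); rwa [Nat.add_sub_cancel' hm] at this
  refine ⟨n₁ + n₂, t, fun m => if m < n₁ then i₁ m else i₂ (m - n₁), ?_, ?_, ?_, ?_, ?_⟩
  · rw [htv 0 (Nat.zero_le _), h10]
  · rw [htv2 n₂, h2n]
  · intro m hm
    by_cases h : m + 1 ≤ n₁
    · rw [htv m (by omega), htv (m + 1) h]
      exact h1m m (by omega)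
    · by_cases h' : m < n₁
      · -- m + 1 = n₁ impossible given ¬(m+1 ≤ n₁) and m < n₁
        omega
      · rw [htv2' m (by omega), htv2' (m + 1) (by omega),
          show m + 1 - n₁ = (m - n₁) + 1 by omega]
        exact h2m (m - n₁) (by omega)
  · intro m hm s hs
    dsimp only
    by_cases h : m < n₁
    · rw [if_pos h]
      rw [htv m h.le, htv (m + 1) h] at hs
      exact h1mem m h s hs
    · rw [if_neg h]
      rw [htv2' m (by omega), htv2' (m + 1) (by omega),
        show m + 1 - n₁ = (m - n₁) + 1 by omega] at hs
      exact h2mem (m - n₁) (by omega) s hs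
  · rw [Finset.sum_range_add]
    congr 1
    · rw [h1s]
      refine Finset.sum_congr rfl fun m hm' => ?_
      have hm := Finset.mem_range.mp hm'
      dsimp only
      rw [if_pos hm, htv m hm.le, htv (m + 1) hm]
    · rw [h2s]
      refine Finset.sum_congr rfl fun m hm' => ?_
      dsimp only
      rw [if_neg (by omega : ¬ n₁ + m < n₁)]
      rw [show n₁ + m + 1 = n₁ + (m + 1) by omega, htv2, htv2,
        show n₁ + m - n₁ = m by omega]

end ClosedOneForm

open Topology

section Paste

variable {α β : Type*} [TopologicalSpace α] [TopologicalSpace β]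

lemma continuousOn_union_of_isClosed {f : α → β} {s t : Set α}
    (hs : IsClosed s) (ht : IsClosed t)
    (hfs : ContinuousOn f s) (hft : ContinuousOn f t) :
    ContinuousOn f (s ∪ t) := by
  intro x hx
  unfold ContinuousWithinAt
  rw [nhdsWithin_union, Filter.tendsto_sup]
  constructor
  · by_cases h : x ∈ s
    · exact hfs x h
    · have hbot : 𝓝[s] x = ⊥ := by
        rw [← Filter.not_neBot]
        exact fun hne => h (hs.closure_eq ▸ mem_closure_iff_nhdsWithin_neBot.mpr hne)
      rw [hbot]
      exact Filter.tendsto_bot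
  · by_cases h : x ∈ t
    · exact hft x h
    · have hbot : 𝓝[t] x = ⊥ := by
        rw [← Filter.not_neBot]
        exact fun hne => h (ht.closure_eq ▸ mem_closure_iff_nhdsWithin_neBot.mpr hne)
      rw [hbot]
      exact Filter.tendsto_bot

lemma continuousOn_biUnion_finset {f : α → β} {C : ℕ → Set α} (F : Finset ℕ)
    (hC : ∀ m ∈ F, IsClosed (C m)) (hf : ∀ m ∈ F, ContinuousOn f (C m)) :
    ContinuousOn f (⋃ m ∈ F, C m) := by
  classical
  induction F using Finset.induction with
  | empty => simp
  | insert a s ha ih =>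
    rw [Finset.set_biUnion_insert]
    refine continuousOn_union_of_isClosed (hC a (Finset.mem_insert_self a s))
      (s.finite_toSet.isClosed_biUnion fun m hm => hC m (Finset.mem_insert_of_mem hm))
      (hf a (Finset.mem_insert_self a s))
      (ih (fun m hm => hC m (Finset.mem_insert_of_mem hm))
          (fun m hm => hf m (Finset.mem_insert_of_mem hm)))

lemma continuousAt_finsetSum {g : ℕ → α → ℝ} {x : α} (F : Finset ℕ)
    (h : ∀ m ∈ F, ContinuousAt (g m) x) :
    ContinuousAt (fun y => ∑ m ∈ F, g m y) x := by
  classical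
  induction F using Finset.induction with
  | empty => simpa using continuousAt_const
  | insert a s ha ih =>
    simp only [Finset.sum_insert ha]
    exact (h a (Finset.mem_insert_self a s)).add
      (ih fun m hm => h m (Finset.mem_insert_of_mem hm))

end Paste

namespace ClosedOneForm

variable {X : Type} [TopologicalSpace X]

lemma pathIntegral_continuous (ω : ClosedOneForm X) {h : X × ℝ → X}
    (hcont : ContinuousOn h (univ ×ˢ Icc (0:ℝ) 1))
    (hex : ∀ x : X, ∃ r, ω.IsPathIntegral (fun t => h (x, t)) 0 1 r) :
    Continuous fun x => ω.pathIntegral (fun t => h (x, t)) 0 1 := by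
  have hγc : ∀ x : X, ContinuousOn (fun s => h (x, s)) (Icc (0:ℝ) 1) := by
    intro x
    exact hcont.comp (Continuous.continuousOn (by fun_prop))
      (fun s hs => ⟨mem_univ _, hs⟩)
  have hxc : ∀ s ∈ Icc (0:ℝ) 1, ∀ x₀ : X, ContinuousAt (fun x => h (x, s)) x₀ := by
    intro s hs x₀
    have h1 : ContinuousWithinAt h (univ ×ˢ Icc (0:ℝ) 1) (x₀, s) := hcont _ ⟨mem_univ _, hs⟩
    have h2 : ContinuousWithinAt (fun x : X => h (x, s)) univ x₀ :=
      ContinuousWithinAt.comp (f := fun x : X => (x, s)) (g := h)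
        (t := univ ×ˢ Icc (0:ℝ) 1) h1
        ((continuous_id.prodMk continuous_const).continuousWithinAt)
        (fun x _ => ⟨mem_univ _, hs⟩)
    rwa [continuousWithinAt_univ] at h2
  rw [continuous_iff_continuousAt]
  intro x₀
  obtain ⟨r, n, t, idx, ht0, htn, hmono, hmem, hsum⟩ := hex x₀
  have hrange := mem_Icc_of_partition ht0 htn hmono
  have tube : ∀ m : ℕ, ∃ V : Set X, IsOpen V ∧ x₀ ∈ V ∧ (m < n →
      ∀ x ∈ V, ∀ s ∈ Icc (t m) (t (m + 1)), h (x, s) ∈ ω.U (idx m)) := by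
    intro m
    by_cases hm : m < n
    case neg => exact ⟨univ, isOpen_univ, mem_univ _, fun h => absurd h hm⟩
    case pos =>
    have hIs : Icc (t m) (t (m + 1)) ⊆ Icc (0:ℝ) 1 :=
      Icc_subset_Icc (hrange m hm.le).1 (hrange (m + 1) hm).2
    have hstep : ∀ s ∈ Icc (t m) (t (m + 1)), ∃ (Vs : Set X) (Ws : Set ℝ),
        IsOpen Vs ∧ IsOpen Ws ∧ x₀ ∈ Vs ∧ s ∈ Ws ∧
        ∀ x ∈ Vs, ∀ u ∈ Ws ∩ Icc (t m) (t (m + 1)), h (x, u) ∈ ω.U (idx m) := by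
      intro s hs
      have hc : ContinuousWithinAt h (univ ×ˢ Icc (0:ℝ) 1) (x₀, s) :=
        hcont _ ⟨mem_univ _, hIs hs⟩
      have hU : ω.U (idx m) ∈ nhds (h (x₀, s)) := (ω.isOpen _).mem_nhds (hmem m hm s hs)
      obtain ⟨O, hOo, hsO, hOsub⟩ := mem_nhdsWithin.mp (hc hU)
      obtain ⟨Vs, Ws, hVo, hxV, hWo, hsW, hVW⟩ := mem_nhds_prod_iff'.mp (hOo.mem_nhds hsO)
      exact ⟨Vs, Ws, hVo, hWo, hxV, hsW, fun x hx u hu =>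
        hOsub ⟨hVW ⟨hx, hu.1⟩, ⟨mem_univ _, hIs hu.2⟩⟩⟩
    choose! Vs Ws hVo hWo hxV hsW hprop using hstep
    have hcover : Icc (t m) (t (m + 1)) ⊆ ⋃ s ∈ Icc (t m) (t (m + 1)), Ws s :=
      fun s hs => mem_biUnion hs (hsW s hs)
    obtain ⟨b', hb'sub, hb'fin, hb'cover⟩ :=
      isCompact_Icc.elim_finite_subcover_image (fun s hs => hWo s hs) hcover
    refine ⟨⋂ s ∈ b', Vs s, hb'fin.isOpen_biInter (fun s hs => hVo s (hb'sub hs)),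
      mem_biInter (fun s hs => hxV s (hb'sub hs)), fun _ x hx u hu => ?_⟩
    obtain ⟨s₀, hs₀b, hs₀W⟩ := mem_iUnion₂.mp (hb'cover hu)
    exact hprop s₀ (hb'sub hs₀b) x (mem_iInter₂.mp hx s₀ hs₀b) u ⟨hs₀W, hu⟩
  choose V hVo hxV hVprop using tube
  have hVallo : IsOpen (⋂ m ∈ Finset.range n, V m) :=
    isOpen_biInter_finset (fun m _ => hVo m)
  have hVallx : x₀ ∈ ⋂ m ∈ Finset.range n, V m := mem_biInter fun m _ => hxV m
  have hVmem : (⋂ m ∈ Finset.range n, V m) ∈ nhds x₀ := hVallo.mem_nhds hVallx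
  have hval : ∀ x ∈ ⋂ m ∈ Finset.range n, V m,
      ω.pathIntegral (fun s => h (x, s)) 0 1 =
      ∑ m ∈ Finset.range n, (ω.f (idx m) (h (x, t (m + 1))) - ω.f (idx m) (h (x, t m))) := by
    intro x hx
    refine ω.pathIntegral_eq (hγc x) ⟨n, t, idx, ht0, htn, hmono, ?_, rfl⟩
    intro m hm s hs
    exact hVprop m hm x (mem_iInter₂.mp hx m (Finset.mem_range.mpr hm)) s hs
  have hrc : ContinuousAt (fun x =>
      ∑ m ∈ Finset.range n, (ω.f (idx m) (h (x, t (m + 1))) - ω.f (idx m) (h (x, t m)))) x₀ := by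
    refine continuousAt_finsetSum _ fun m hm' => ?_
    have hm := Finset.mem_range.mp hm'
    have e1 : t (m + 1) ∈ Icc (t m) (t (m + 1)) := ⟨hmono m hm, le_rfl⟩
    have e0 : t m ∈ Icc (t m) (t (m + 1)) := ⟨le_rfl, hmono m hm⟩
    refine ContinuousAt.sub ?_ ?_
    · exact ContinuousAt.comp (g := ω.f (idx m)) (f := fun x => h (x, t (m + 1)))
        ((ω.cont (idx m)).continuousAt ((ω.isOpen _).mem_nhds (hmem m hm _ e1)))
        (hxc (t (m + 1)) (hrange (m + 1) hm) x₀)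
    · exact ContinuousAt.comp (g := ω.f (idx m)) (f := fun x => h (x, t m))
        ((ω.cont (idx m)).continuousAt ((ω.isOpen _).mem_nhds (hmem m hm _ e0)))
        (hxc (t m) (hrange m hm.le) x₀)
  exact hrc.congr (Filter.eventuallyEq_of_mem hVmem (fun x hx => (hval x hx).symm))

end ClosedOneForm

open ClosedOneForm

/-- **Iteration of a strictly decreasing deformation.**  Let `X` be a compact
space with a continuous closed 1-form `ω`.  If there is a homotopy
`h : X × [0,1] → X` with `h(x,0) = x` and `∫_{t ↦ h(x,t)} ω < 0` for all `x`,
then for every `N > 0` there is a homotopy `H : X × [0,1] → X` with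
`H(x,0) = x` and `∫_{t ↦ H(x,t)} ω ≤ −N` for all `x`; i.e. `X` itself is
`N`-movable with respect to `ω` for every `N`, and hence `cat(X, ω) = 0`. -/
theorem whole_space_movable_of_decreasing_homotopy
    (X : Type) [TopologicalSpace X] [CompactSpace X]
    (ω : ClosedOneForm X) (h : X × ℝ → X)
    (hcont : ContinuousOn h (Set.univ ×ˢ Set.Icc (0 : ℝ) 1))
    (h0 : ∀ x : X, h (x, 0) = x)
    (hneg : ∀ x : X, ω.pathIntegral (fun t => h (x, t)) 0 1 < 0) :
    (∀ N : ℝ, 0 < N → ∃ H : X × ℝ → X,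
        ContinuousOn H (Set.univ ×ˢ Set.Icc (0 : ℝ) 1) ∧
        (∀ x : X, H (x, 0) = x) ∧
        (∀ x : X, ω.pathIntegral (fun t => H (x, t)) 0 1 ≤ -N)) ∧
      ω.catForm = 0 := by
  have key : ∀ N : ℝ, 0 < N → ∃ H : X × ℝ → X,
      ContinuousOn H (Set.univ ×ˢ Set.Icc (0 : ℝ) 1) ∧
      (∀ x : X, H (x, 0) = x) ∧
      (∀ x : X, ω.pathIntegral (fun t => H (x, t)) 0 1 ≤ -N) := by
    rcases isEmpty_or_nonempty X with hX | hX
    · intro N _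
      exact ⟨h, hcont, fun x => isEmptyElim x, fun x => isEmptyElim x⟩
    intro N hN
    have hex : ∀ x : X, ∃ r, ω.IsPathIntegral (fun t => h (x, t)) 0 1 r := by
      intro x
      by_contra hc
      have hzero : ω.pathIntegral (fun t => h (x, t)) 0 1 = 0 := by
        rw [pathIntegral, dif_neg hc]
      exact absurd (hzero ▸ hneg x) (lt_irrefl 0)
    set φ : X → ℝ := fun x => ω.pathIntegral (fun t => h (x, t)) 0 1 with hφ
    have hφc : Continuous φ := ω.pathIntegral_continuous hcont hex
    obtain ⟨x₀, -, hx₀⟩ := isCompact_univ.exists_isMaxOn univ_nonempty hφc.continuousOn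
    set ε : ℝ := -φ x₀ with hε
    have hεpos : 0 < ε := by
      have := hneg x₀
      simp only [hε, hφ]
      linarith
    have hφle : ∀ x, φ x ≤ -ε := fun x => by
      have h' : φ x ≤ φ x₀ := hx₀ (mem_univ x)
      simp only [hε]
      linarith
    set k : ℕ := max 1 ⌈N / ε⌉₊ with hk
    have hk1 : 1 ≤ k := le_max_left _ _
    have hkN : N ≤ (k : ℝ) * ε := by
      have h1 : N / ε ≤ (⌈N / ε⌉₊ : ℝ) := Nat.le_ceil _
      have h2 : ((⌈N / ε⌉₊ : ℕ) : ℝ) ≤ (k : ℝ) := by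
        exact_mod_cast le_max_right 1 ⌈N / ε⌉₊
      have h3 : N / ε ≤ (k : ℝ) := h1.trans h2
      calc N = (N / ε) * ε := by field_simp
        _ ≤ (k : ℝ) * ε := mul_le_mul_of_nonneg_right h3 hεpos.le
    have hkR : (0 : ℝ) < (k : ℝ) := by exact_mod_cast hk1.trans_lt' Nat.zero_lt_one
    set g : X → X := fun x => h (x, 1) with hg
    have hgc : Continuous g := by
      rw [continuous_iff_continuousAt]
      intro x
      have h1 : ContinuousWithinAt h (univ ×ˢ Icc (0:ℝ) 1) (x, 1) :=
        hcont _ ⟨mem_univ _, by norm_num⟩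
      have h2 : ContinuousWithinAt (fun y : X => h (y, 1)) univ x :=
        ContinuousWithinAt.comp (f := fun y : X => (y, (1:ℝ))) (g := h)
          (t := univ ×ˢ Icc (0:ℝ) 1) h1
          ((continuous_id.prodMk continuous_const).continuousWithinAt)
          (fun y _ => ⟨mem_univ _, by norm_num⟩)
      rwa [continuousWithinAt_univ] at h2
    set M : ℝ → ℕ := fun t => min (k - 1) ⌊(k : ℝ) * t⌋₊ with hM
    set H : X × ℝ → X := fun p => h (g^[M p.2] p.1, (k : ℝ) * p.2 - (M p.2 : ℝ)) with hH
    have claimA : ∀ m : ℕ, m < k → ∀ x : X, ∀ t ∈ Icc ((m : ℝ) / k) (((m : ℝ) + 1) / k),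
        H (x, t) = h (g^[m] x, (k : ℝ) * t - m) := by
      intro m hm x t ht
      have h1 : (m : ℝ) ≤ (k : ℝ) * t := by
        have := (div_le_iff₀ hkR).mp ht.1
        linarith [mul_comm t (k : ℝ)]
      have h2 : (k : ℝ) * t ≤ (m : ℝ) + 1 := by
        have := (le_div_iff₀ hkR).mp ht.2
        linarith [mul_comm t (k : ℝ)]
      have hnn : (0 : ℝ) ≤ (k : ℝ) * t := le_trans (Nat.cast_nonneg m) h1
      by_cases hlt : (k : ℝ) * t < (m : ℝ) + 1
      · have hfl : ⌊(k : ℝ) * t⌋₊ = m := by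
          rw [Nat.floor_eq_iff hnn]
          exact ⟨h1, hlt⟩
        have hMt : M t = m := by
          simp only [hM, hfl]
          exact min_eq_right (by omega)
        rw [hH]
        simp only
        rw [hMt]
      · have heq : (k : ℝ) * t = (m : ℝ) + 1 := le_antisymm h2 (not_lt.mp hlt)
        have hfl : ⌊(k : ℝ) * t⌋₊ = m + 1 := by
          rw [heq, show (m : ℝ) + 1 = ((m + 1 : ℕ) : ℝ) by push_cast [Nat.cast_add]; ring, Nat.floor_natCast]
        by_cases hm1 : m + 1 ≤ k - 1
        · have hMt : M t = m + 1 := by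
            rw [hM]
            simp only [hfl]
            omega
          have hz : (k : ℝ) * t - ((m + 1 : ℕ) : ℝ) = 0 := by push_cast; linarith
          have step1 : H (x, t) = h (g^[m + 1] x, 0) := by
            rw [hH]; simp only; rw [hMt, hz]
          rw [step1, h0, Function.iterate_succ_apply',
            show (k : ℝ) * t - (m : ℝ) = 1 by linarith]
        · have hmk : m = k - 1 := by omega
          have hMt : M t = m := by
            simp only [hM, hfl]
            exact (min_eq_left (by omega)).trans (by omega)
          rw [hH]
          simp only
          rw [hMt]
    have hcover : ∀ t ∈ Icc (0 : ℝ) 1, ∃ m, m < k ∧ t ∈ Icc ((m : ℝ) / k) (((m : ℝ) + 1) / k) := by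
      intro t ht
      refine ⟨M t, by simp only [hM]; exact lt_of_le_of_lt (min_le_left _ _) (by omega), ?_, ?_⟩
      · have hnn : (0 : ℝ) ≤ (k : ℝ) * t := mul_nonneg hkR.le ht.1
        have hfl : ((M t : ℕ) : ℝ) ≤ (k : ℝ) * t := by
          refine le_trans ?_ (Nat.floor_le hnn)
          exact_mod_cast min_le_right (k - 1) ⌊(k : ℝ) * t⌋₊
        rw [div_le_iff₀ hkR]
        linarith [mul_comm t (k : ℝ)]
      · rw [le_div_iff₀ hkR]
        by_cases hc : ⌊(k : ℝ) * t⌋₊ ≤ k - 1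
        · have hMt : M t = ⌊(k : ℝ) * t⌋₊ := by simp only [hM]; exact min_eq_right hc
          have := Nat.lt_floor_add_one ((k : ℝ) * t)
          rw [hMt]
          linarith [mul_comm t (k : ℝ)]
        · have hMt : M t = k - 1 := by simp only [hM]; exact min_eq_left (by omega)
          rw [hMt]
          have : ((k - 1 : ℕ) : ℝ) + 1 = (k : ℝ) := by
            rw [Nat.cast_sub hk1]
            ring
          rw [this]
          nlinarith [ht.2, hkR]
    have hpiece : ∀ m ∈ Finset.range k,
        ContinuousOn H (univ ×ˢ Icc ((m : ℝ) / k) (((m : ℝ) + 1) / k)) := by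
      intro m hm'
      have hm := Finset.mem_range.mp hm'
      have hFc : ContinuousOn (fun p : X × ℝ => h (g^[m] p.1, (k : ℝ) * p.2 - m))
          (univ ×ˢ Icc ((m : ℝ) / k) (((m : ℝ) + 1) / k)) := by
        refine hcont.comp (Continuous.continuousOn ?_) ?_
        · exact ((hgc.iterate m).comp continuous_fst).prodMk
            ((continuous_const.mul continuous_snd).sub continuous_const)
        · intro p hp
          refine ⟨mem_univ _, ?_, ?_⟩
          · have := (div_le_iff₀ hkR).mp hp.2.1
            simp only
            linarith [mul_comm p.2 (k : ℝ)]
          · have := (le_div_iff₀ hkR).mp hp.2.2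
            simp only
            linarith [mul_comm p.2 (k : ℝ)]
      exact hFc.congr (fun p hp => claimA m hm p.1 p.2 hp.2)
    have hHc : ContinuousOn H (univ ×ˢ Icc (0 : ℝ) 1) := by
      refine ContinuousOn.mono (continuousOn_biUnion_finset (Finset.range k)
        (fun m _ => isClosed_univ.prod isClosed_Icc) hpiece) ?_
      intro p hp
      obtain ⟨m, hm, hmem⟩ := hcover p.2 hp.2
      exact mem_biUnion (Finset.mem_range.mpr hm) ⟨mem_univ _, hmem⟩
    have hH0 : ∀ x : X, H (x, 0) = x := by
      intro x
      have hM0 : M 0 = 0 := by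
        rw [hM]
        simp
      rw [hH]
      simp only
      rw [hM0]
      simp only [Function.iterate_zero_apply, Nat.cast_zero, mul_zero, sub_zero]
      exact h0 x
    have hφspec : ∀ y : X, ω.IsPathIntegral (fun s => h (y, s)) 0 1 (φ y) := by
      intro y
      have hne : φ y ≠ 0 := (lt_of_le_of_lt (hφle y) (by linarith)).ne
      exact ω.isPathIntegral_self hne
    have hseg : ∀ x : X, ∀ m : ℕ, m < k →
        ω.IsPathIntegral (fun t => H (x, t)) ((m : ℝ) / k) (((m : ℝ) + 1) / k)
          (φ (g^[m] x)) := by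
      intro x m hm
      have aff := ω.isPathIntegral_affine (k := (k : ℝ)) (c := -(m : ℝ)) hkR (hφspec (g^[m] x))
      have e0 : (0 - -(m : ℝ)) / (k : ℝ) = (m : ℝ) / k := by ring_nf
      have e1 : (1 - -(m : ℝ)) / (k : ℝ) = ((m : ℝ) + 1) / k := by ring_nf
      rw [e0, e1] at aff
      refine ω.isPathIntegral_congr ?_ aff
      intro s hs
      show h (g^[m] x, (k : ℝ) * s + -(m : ℝ)) = H (x, s)
      rw [show (k : ℝ) * s + -(m : ℝ) = (k : ℝ) * s - m by ring, claimA m hm x s hs]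
    have hpart : ∀ x : X, ∀ m : ℕ, m ≤ k →
        ω.IsPathIntegral (fun t => H (x, t)) 0 ((m : ℝ) / k)
          (∑ j ∈ Finset.range m, φ (g^[j] x)) := by
      intro x m
      induction m with
      | zero =>
        intro _
        obtain ⟨i₀, _⟩ := ω.covers (H (x, 0))
        exact ⟨0, fun _ => 0, fun _ => i₀, rfl, by norm_num, by omega, by omega, by simp⟩
      | succ m ih =>
        intro hmk
        have h1 := ih (by omega)
        have h2 := hseg x m (by omega)
        have h3 := ω.isPathIntegral_trans h1 h2
        rw [Finset.sum_range_succ]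
        have ecast : ((m : ℝ) + 1) / (k : ℝ) = (((m + 1 : ℕ) : ℝ)) / k := by push_cast; ring
        rw [← ecast]
        exact h3
    refine ⟨H, hHc, hH0, fun x => ?_⟩
    have hcγ : ContinuousOn (fun t => H (x, t)) (Icc (0 : ℝ) 1) :=
      hHc.comp (Continuous.continuousOn (continuous_const.prodMk continuous_id))
        (fun s hs => ⟨mem_univ _, hs⟩)
    have hfin := hpart x k le_rfl
    rw [show ((k : ℕ) : ℝ) / (k : ℝ) = 1 from div_self (ne_of_gt hkR)] at hfin
    rw [ω.pathIntegral_eq hcγ hfin]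
    calc ∑ j ∈ Finset.range k, φ (g^[j] x)
        ≤ ∑ _j ∈ Finset.range k, (-ε) := Finset.sum_le_sum (fun j _ => hφle _)
      _ = (k : ℝ) * (-ε) := by
          rw [Finset.sum_const, Finset.card_range, nsmul_eq_mul]
      _ ≤ -N := by linarith
  refine ⟨key, ?_⟩
  have hmem0 : 0 ∈ {k | ∀ N : ℝ, 0 < N →
      ∃ A : Set X, IsClosed A ∧ ω.NMovable A N ∧ CatLE X Aᶜ k} := by
    intro N hN
    obtain ⟨H, hc, h0', hint⟩ := key N hN
    refine ⟨univ, isClosed_univ, ⟨H, hc, fun a _ => h0' a, fun a _ => hint a⟩, ?_⟩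
    exact ⟨fun i => i.elim0, fun i => i.elim0, by simp, fun i => i.elim0⟩
  rw [ClosedOneForm.catForm]
  exact Nat.sInf_eq_zero.mpr (Or.inl hmem0)
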